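/- Lower-bound geometric sum estimate (Lemma: k = n case, lower bound on consumed potential): Let k > ℓ ≥ 1 be integers, α ≥ 2, γ > 0, and p ≥ 2γ ln k / (ℓ(1/k + 1/k^α)). If additionally k^{α−γ} ≥ 3k, then ℓ(k−ℓ)(1/k − 1/k^α)·∑_{i=0}^{p−1}(1 − ℓ(1/k + 1/k^α))^i ≥ (k−ℓ)(1 − 1/k^γ). -/
import Mathlib

set_option maxHeartbeats 1000000 in
/-- Lower-bound geometric sum estimate (case `k = n`, lower bound on consumed
potential). -/
theorem stmt13 (k ℓ : ℕ) (hℓ : 1 ≤ ℓ) (hℓk : ℓ < k)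
    (α γ : ℝ) (hα : 2 ≤ α) (hγ : 0 < γ) (p : ℕ)
    (hp : 2 * γ * Real.log k / ((ℓ : ℝ) * (1 / (k : ℝ) + 1 / (k : ℝ) ^ α)) ≤ (p : ℝ))
    (hkαγ : 3 * (k : ℝ) ≤ (k : ℝ) ^ (α - γ)) :
    ((k : ℝ) - ℓ) * (1 - 1 / (k : ℝ) ^ γ)
      ≤ (ℓ : ℝ) * ((k : ℝ) - ℓ) * (1 / (k : ℝ) - 1 / (k : ℝ) ^ α) *
          ∑ i ∈ Finset.range p,
            (1 - (ℓ : ℝ) * (1 / (k : ℝ) + 1 / (k : ℝ) ^ α)) ^ i := by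
  have hk2 : 2 ≤ k := lt_of_le_of_lt hℓ hℓk
  have hK2 : (2:ℝ) ≤ (k:ℝ) := by exact_mod_cast hk2
  have hL1 : (1:ℝ) ≤ (ℓ:ℝ) := by exact_mod_cast hℓ
  have hLK' : (ℓ:ℝ) + 1 ≤ (k:ℝ) := by exact_mod_cast hℓk
  set K : ℝ := (k : ℝ) with hKdef
  set L : ℝ := (ℓ : ℝ) with hLdef
  have hK0 : (0:ℝ) < K := by linarith
  have hK1 : (1:ℝ) < K := by linarith
  have hLK : L ≤ K - 1 := by linarith
  set A : ℝ := K ^ α with hAdef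
  set G : ℝ := K ^ γ with hGdef
  have hA0 : 0 < A := Real.rpow_pos_of_pos hK0 α
  have hG0 : 0 < G := Real.rpow_pos_of_pos hK0 γ
  have hG1 : 1 ≤ G := Real.one_le_rpow hK1.le hγ.le
  have hA2 : K * K ≤ A := by
    have h2 : K ^ (2:ℝ) ≤ K ^ α := (Real.rpow_le_rpow_left_iff hK1).mpr hα
    calc K * K = K ^ (2:ℝ) := by
          rw [show ((2:ℝ)) = ((2:ℕ):ℝ) by norm_num, Real.rpow_natCast]; ring
      _ ≤ A := h2
  have hAG : 3 * K * G ≤ A := by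
    have h : K ^ (α - γ) * G ≤ A := by
      rw [hAdef, hGdef, ← Real.rpow_add hK0]
      norm_num
    nlinarith
  set x : ℝ := L * (1 / K + 1 / A) with hxdef
  have hx0 : 0 < x := by positivity
  have hx1 : x < 1 := by
    have hxe : x = L * (A + K) / (K * A) := by
      rw [hxdef]; field_simp
    rw [hxe, div_lt_one (by positivity)]
    nlinarith
  have hsum : ∑ i ∈ Finset.range p, (1 - x) ^ i = (1 - (1 - x) ^ p) / x := by
    rw [geom_sum_eq (by intro h; rw [sub_eq_iff_eq_add] at h; nlinarith) p]
    rw [show (1 - x - 1) = -x by ring]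
    rw [div_neg, ← neg_div, neg_sub]
  have hpx : 2 * γ * Real.log K ≤ (p:ℝ) * x := by
    rw [div_le_iff₀ hx0] at hp
    exact hp
  have hGG : G * G = K ^ (2 * γ) := by
    rw [hGdef, ← Real.rpow_add hK0]; ring_nf
  have hpow : (1 - x) ^ p ≤ 1 / (G * G) := by
    have h1 : (1 - x) ^ p ≤ Real.exp (-x) ^ p := by
      apply pow_le_pow_left₀ (by linarith)
      linarith [Real.add_one_le_exp (-x)]
    have h2 : Real.exp (-x) ^ p = Real.exp (-((p:ℝ) * x)) := by
      rw [← Real.exp_nat_mul]; ring_nf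
    have h3 : Real.exp (-((p:ℝ) * x)) ≤ Real.exp (-(2 * γ * Real.log K)) :=
      Real.exp_le_exp.mpr (by linarith)
    have h4 : Real.exp (-(2 * γ * Real.log K)) = 1 / (G * G) := by
      rw [hGG, Real.rpow_def_of_pos hK0, Real.exp_neg, one_div]
      ring_nf
    calc (1 - x) ^ p ≤ Real.exp (-x) ^ p := h1
      _ = Real.exp (-((p:ℝ) * x)) := h2
      _ ≤ Real.exp (-(2 * γ * Real.log K)) := h3
      _ = 1 / (G * G) := h4
  have hunit : (1 - 1 / G) * (1 / K + 1 / A) ≤ (1 / K - 1 / A) * (1 - 1 / (G * G)) := by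
    have lhs_eq : (1 - 1 / G) * (1 / K + 1 / A) = ((G - 1) * (A + K)) / (G * (K * A)) := by
      field_simp
    have rhs_eq : (1 / K - 1 / A) * (1 - 1 / (G * G))
        = ((A - K) * (G * G - 1)) / ((K * A) * (G * G)) := by
      field_simp
    rw [lhs_eq, rhs_eq, div_le_div_iff₀ (by positivity) (by positivity)]
    have e1 : (0:ℝ) ≤ G - 1 := by linarith
    have eKG : K * 1 ≤ K * G := mul_le_mul_of_nonneg_left hG1 hK0.le
    have e2 : (0:ℝ) ≤ A - 2 * K * G - K := by linarith
    linarith [mul_nonneg (mul_nonneg (mul_nonneg e1 e2) hG0.le) (mul_pos hK0 hA0).le]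
  have hC0 : 0 ≤ L * (K - L) := by nlinarith
  have key : (K - L) * (1 - 1 / G) * x ≤ L * (K - L) * (1 / K - 1 / A) * (1 - 1 / (G * G)) := by
    have h := mul_le_mul_of_nonneg_left hunit hC0
    calc (K - L) * (1 - 1 / G) * x = L * (K - L) * ((1 - 1 / G) * (1 / K + 1 / A)) := by
          rw [hxdef]; ring
      _ ≤ L * (K - L) * ((1 / K - 1 / A) * (1 - 1 / (G * G))) := h
      _ = L * (K - L) * (1 / K - 1 / A) * (1 - 1 / (G * G)) := by ring
  rw [hsum]
  have hCoef : 0 ≤ L * (K - L) * (1 / K - 1 / A) := by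
    have : 1 / A ≤ 1 / K := one_div_le_one_div_of_le hK0 (by nlinarith)
    apply mul_nonneg hC0
    linarith
  have hstep : L * (K - L) * (1 / K - 1 / A) * ((1 - 1 / (G * G)) / x)
      ≤ L * (K - L) * (1 / K - 1 / A) * ((1 - (1 - x) ^ p) / x) := by
    apply mul_le_mul_of_nonneg_left _ hCoef
    gcongr (?_) / x
    linarith
  refine le_trans ?_ hstep
  rw [show L * (K - L) * (1 / K - 1 / A) * ((1 - 1 / (G * G)) / x)
      = (L * (K - L) * (1 / K - 1 / A) * (1 - 1 / (G * G))) / x by ring,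
    le_div_iff₀ hx0]
  linarith [key]
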